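/- arXiv:1610.06663 — 3 statements merged into one kernel-verified Lean document; each statement's English description precedes it below -/
import Mathlib

section
/- In the loop L = ℤ × ℤ with product (p,q)·(p',q') = (p+p', q+q'+C(p,2)·C(p',2)), the subset L₂ = {(0,q) | q ∈ ℤ} is the centre of L: every element of L₂ commutes and associates with all elements of L, and conversely any element commuting and associating with all elements lies in L₂. -/
/-- C(p,2) = p(p-1)/2 for an arbitrary integer p. -/
def c2 (p : ℤ) : ℤ := p * (p - 1) / 2

/-- The product (p,q)·(p',q') = (p+p', q+q'+C(p,2)·C(p',2)). -/
def lmul4 (x y : ℤ × ℤ) : ℤ × ℤ := (x.1 + y.1, x.2 + y.2 + c2 x.1 * c2 y.1)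

lemma two_c2 (p : ℤ) : 2 * c2 p = p * (p - 1) := by
  obtain ⟨k, hk⟩ := Int.even_mul_succ_self (p - 1)
  have h : p * (p - 1) = 2 * k := by ring_nf; ring_nf at hk; linarith
  rw [c2, h, Int.mul_ediv_cancel_left _ two_ne_zero]

lemma c2_zero : c2 0 = 0 := by decide

/-- In the loop L = ℤ × ℤ with product (p,q)·(p',q') = (p+p', q+q'+C(p,2)C(p',2)),
an element z is in the centre (it commutes and associates in all positions with
all elements) if and only if z ∈ L₂ = {(0,q) | q ∈ ℤ}, i.e. z.1 = 0. -/
theorem stmt1 (z : ℤ × ℤ) :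
    ((∀ x : ℤ × ℤ, lmul4 z x = lmul4 x z) ∧
     (∀ x y : ℤ × ℤ, lmul4 z (lmul4 x y) = lmul4 (lmul4 z x) y) ∧
     (∀ x y : ℤ × ℤ, lmul4 x (lmul4 z y) = lmul4 (lmul4 x z) y) ∧
     (∀ x y : ℤ × ℤ, lmul4 x (lmul4 y z) = lmul4 (lmul4 x y) z)) ↔
    z.1 = 0 := by
  constructor
  · rintro ⟨-, h2, -, -⟩
    have e1 := h2 (1, 0) (1, 0)
    have e2 := h2 (2, 0) (2, 0)
    simp only [lmul4, Prod.mk.injEq, Prod.ext_iff] at e1 e2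
    have c1 : c2 1 = 0 := by decide
    have c22 : c2 2 = 1 := by decide
    have c4 : c2 4 = 6 := by decide
    have r1 : (1:ℤ) + 1 = 2 := by norm_num
    have r2 : (2:ℤ) + 2 = 4 := by norm_num
    rw [r1, c1, c22] at e1
    rw [r2, c22, c4] at e2
    have hz : c2 z.1 = 0 := by have := e1.2; simp at this; linarith
    have hz2 : c2 (z.1 + 2) = 1 := by have := e2.2; simp at this; linarith
    have h1 : z.1 * (z.1 - 1) = 0 := by have := two_c2 z.1; rw [hz] at this; linarith
    have h2' : (z.1 + 2) * (z.1 + 1) = 2 := by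
      have := two_c2 (z.1 + 2); rw [hz2] at this; ring_nf at this ⊢; linarith
    rcases mul_eq_zero.1 h1 with h | h
    · exact h
    · exfalso; have : z.1 = 1 := by linarith
      rw [this] at h2'; norm_num at h2'
  · intro h
    have hc : c2 z.1 = 0 := by rw [h]; exact c2_zero
    refine ⟨fun x => ?_, fun x y => ?_, fun x y => ?_, fun x y => ?_⟩ <;>
      simp only [lmul4, hc, h, c2_zero, Prod.mk.injEq, add_zero, zero_add, zero_mul, mul_zero] <;>
      refine ⟨trivial, ?_⟩ <;> ring
end

section
/- The left multiplication group of the loop L = ℤ × ℤ with product (p,q)·(p',q') = (p+p', q+q'+C(p,2)·C(p',2)) is nilpotent of class at most 3: every 4-fold iterated commutator [F₁,[F₂,[F₃,F₄]]] of elements of the group generated by the left translations L_c (c ∈ L) is the identity permutation. -/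
/-- Left translation L_c by c in the loop L = ℤ × ℤ with product
(p,q)·(p',q') = (p+p', q+q'+C(p,2)·C(p',2)), as a permutation of L. -/
def Ltrans (c : ℤ × ℤ) : Equiv.Perm (ℤ × ℤ) where
  toFun x := (c.1 + x.1, c.2 + x.2 + c2 c.1 * c2 x.1)
  invFun y := (y.1 - c.1, y.2 - c.2 - c2 c.1 * c2 (y.1 - c.1))
  left_inv x := by
    refine Prod.ext (by dsimp; ring) ?_
    dsimp
    rw [add_sub_cancel_left]
    ring
  right_inv y := by
    refine Prod.ext (by dsimp; ring) ?_
    dsimp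
    ring

/-- The commutator F⁻¹ ∘ G⁻¹ ∘ F ∘ G of two permutations. -/
def pcomm (F G : Equiv.Perm (ℤ × ℤ)) : Equiv.Perm (ℤ × ℤ) := F⁻¹ * G⁻¹ * F * G

lemma c2_add (a b : ℤ) : c2 (a + b) = c2 a + c2 b + a * b := by
  have h1 := two_c2 (a + b)
  have h2 := two_c2 a
  have h3 := two_c2 b
  nlinarith [h1, h2, h3]

lemma c2_neg (a : ℤ) : c2 (-a) = c2 a + a := by
  have h1 := two_c2 (-a)
  have h2 := two_c2 a
  nlinarith [h1, h2]

/-- The standard affine-quadratic form of maps in the left multiplication group. -/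
def mk (a α β γ : ℤ) (x : ℤ × ℤ) : ℤ × ℤ :=
  (a + x.1, x.2 + α * c2 x.1 + β * x.1 + γ)

/-- Predicate: F is of standard form. -/
def Pf (F : Equiv.Perm (ℤ × ℤ)) : Prop :=
  ∃ a α β γ : ℤ, ∀ x, F x = mk a α β γ x

lemma Pf_inv_explicit {F : Equiv.Perm (ℤ × ℤ)} {a α β γ : ℤ}
    (hF : ∀ x, F x = mk a α β γ x) :
    ∀ x, F⁻¹ x = mk (-a) (-α) (α * a - β) (β * a - γ - α * (c2 a + a)) x := by
  intro x
  apply F.injective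
  rw [Equiv.Perm.inv_def, Equiv.apply_symm_apply, hF]
  refine Prod.ext ?_ ?_ <;>
    simp only [mk, c2_add, c2_neg] <;> ring

lemma Pf_inv {F : Equiv.Perm (ℤ × ℤ)} (hF : Pf F) : Pf F⁻¹ := by
  obtain ⟨a, α, β, γ, h⟩ := hF
  exact ⟨_, _, _, _, Pf_inv_explicit h⟩

lemma Pf_mul {F G : Equiv.Perm (ℤ × ℤ)} (hF : Pf F) (hG : Pf G) : Pf (F * G) := by
  obtain ⟨a, α, β, γ, hF⟩ := hF
  obtain ⟨b, α', β', γ', hG⟩ := hG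
  refine ⟨a + b, α + α', β + β' + α * b, γ + γ' + α * c2 b + β * b, fun x => ?_⟩
  rw [Equiv.Perm.mul_apply, hG, hF]
  refine Prod.ext ?_ ?_ <;>
    simp only [mk, c2_add] <;> ring

lemma Pf_one : Pf 1 := by
  refine ⟨0, 0, 0, 0, fun x => ?_⟩
  refine Prod.ext ?_ ?_ <;> simp [mk]

lemma Pf_gen (c : ℤ × ℤ) : Pf (Ltrans c) := by
  refine ⟨c.1, c2 c.1, 0, c.2, fun x => ?_⟩
  refine Prod.ext ?_ ?_ <;> simp [Ltrans, mk] <;> ring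

lemma Pf_closure {F : Equiv.Perm (ℤ × ℤ)}
    (h : F ∈ Subgroup.closure (Set.range Ltrans)) : Pf F := by
  induction h using Subgroup.closure_induction with
  | mem x hx => obtain ⟨c, rfl⟩ := hx; exact Pf_gen c
  | one => exact Pf_one
  | mul x y hx hy px py => exact Pf_mul px py
  | inv x hx px => exact Pf_inv px

/-- Commutator of two standard-form maps: a-part and α-part vanish. -/
lemma comm_form {F G : Equiv.Perm (ℤ × ℤ)} {a α β γ b α' β' γ' : ℤ}
    (hF : ∀ x, F x = mk a α β γ x) (hG : ∀ x, G x = mk b α' β' γ' x) :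
    ∀ x, pcomm F G x = mk 0 0 (α * b - α' * a) ((pcomm F G (0, 0)).2) x := by
  have hFi := Pf_inv_explicit hF
  have hGi := Pf_inv_explicit hG
  intro x
  simp only [pcomm, Equiv.Perm.mul_apply, hF, hG, hFi, hGi]
  refine Prod.ext ?_ ?_ <;>
    simp only [mk, c2_add, c2_neg, c2_zero] <;> ring

/-- The left multiplication group of the loop L = ℤ × ℤ with product
(p,q)·(p',q') = (p+p', q+q'+C(p,2)C(p',2)) is nilpotent of class at most 3:
every 4-fold iterated commutator of elements of the subgroup of Perm(L)
generated by the left translations is the identity. -/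
theorem stmt3 (F₁ F₂ F₃ F₄ : Equiv.Perm (ℤ × ℤ))
    (h₁ : F₁ ∈ Subgroup.closure (Set.range Ltrans))
    (h₂ : F₂ ∈ Subgroup.closure (Set.range Ltrans))
    (h₃ : F₃ ∈ Subgroup.closure (Set.range Ltrans))
    (h₄ : F₄ ∈ Subgroup.closure (Set.range Ltrans)) :
    pcomm F₁ (pcomm F₂ (pcomm F₃ F₄)) = 1 := by
  obtain ⟨a₁, α₁, β₁, γ₁, hF₁⟩ := Pf_closure h₁
  obtain ⟨a₂, α₂, β₂, γ₂, hF₂⟩ := Pf_closure h₂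
  obtain ⟨a₃, α₃, β₃, γ₃, hF₃⟩ := Pf_closure h₃
  obtain ⟨a₄, α₄, β₄, γ₄, hF₄⟩ := Pf_closure h₄
  -- C₁ = [F₃, F₄] has a = 0, α = 0
  have hC₁ := comm_form hF₃ hF₄
  -- C₂ = [F₂, C₁] has a = 0, α = 0, β = 0 (since β = α₂*0 - 0*a₂ = 0)
  have hC₂ := comm_form hF₂ hC₁
  rw [show α₂ * 0 - 0 * a₂ = 0 by ring] at hC₂
  -- C₃ = [F₁, C₂] = 1 since C₂ is a central translation
  have hC₃ := comm_form hF₁ hC₂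
  rw [show α₁ * 0 - 0 * a₁ = 0 by ring] at hC₃
  -- It remains to show the γ-part of C₃ is 0, i.e. C₂ is central.
  set G : Equiv.Perm (ℤ × ℤ) := pcomm F₂ (pcomm F₃ F₄) with hG
  have hγ : (pcomm F₁ G (0, 0)).2 = 0 := by
    have hFi := Pf_inv_explicit hF₁
    have hC₂i := Pf_inv_explicit hC₂
    simp only [pcomm, Equiv.Perm.mul_apply]
    rw [hC₂, hF₁, hC₂i, hFi]
    simp only [mk, c2_add, c2_neg, c2_zero]
    linear_combination (-α₁) * two_c2 a₁
  ext x
  · rw [hC₃ x, hγ]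
    simp [mk]
  · rw [hC₃ x, hγ]
    simp [mk]
end

section
/- Let F be a free group on generators x₁,…,xₙ and let M : F → (ℚ⟨⟨X₁,…,Xₙ⟩⟩)ˣ be the Magnus homomorphism into the units of the ring of non-commutative formal power series, sending xᵢ ↦ 1 + Xᵢ. Then for n ≥ 2, the image of the iterated commutator [x₁,[x₂,[…,[x_{n−1},xₙ]…]]]·x₁ under M has the form 1 + X₁ + (terms of total degree ≥ n). -/
/-- Non-commutative formal power series in variables X₁,…,Xₙ over ℚ:
functions assigning to each word in the free monoid its coefficient. -/
def NCSeries (n : ℕ) : Type := FreeMonoid (Fin n) → ℚ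

instance {n : ℕ} : DecidableEq (FreeMonoid (Fin n)) :=
  inferInstanceAs (DecidableEq (List (Fin n)))

/-- Convolution product of non-commutative power series. -/
def ncmul {n : ℕ} (f g : NCSeries n) : NCSeries n := fun w =>
  ∑ k ∈ Finset.range ((FreeMonoid.toList w).length + 1),
    f (FreeMonoid.ofList ((FreeMonoid.toList w).take k)) *
      g (FreeMonoid.ofList ((FreeMonoid.toList w).drop k))

/-- The power series 1. -/
def ncone {n : ℕ} : NCSeries n := fun w => if w = 1 then 1 else 0

/-- The power series 1 + Xᵢ. -/
def onePlusX {n : ℕ} (i : Fin n) : NCSeries n := fun w =>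
  if w = 1 ∨ w = FreeMonoid.of i then 1 else 0

/-- The group commutator [a,b] = a⁻¹b⁻¹ab. -/
def gcomm {n : ℕ} (a b : FreeGroup (Fin n)) : FreeGroup (Fin n) :=
  a⁻¹ * b⁻¹ * a * b

namespace S9

variable {n : ℕ}

lemma eq_one_of_toList (w : FreeMonoid (Fin n)) (h : FreeMonoid.toList w = []) : w = 1 := by
  have : FreeMonoid.ofList (FreeMonoid.toList w) = w := FreeMonoid.ofList_toList w
  rw [h] at this; exact this.symm

/-- order ≥ k deviation from 1 -/
def ord (k : ℕ) (f : NCSeries n) : Prop :=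
  ∀ w : FreeMonoid (Fin n), (FreeMonoid.toList w).length < k → f w = ncone w

lemma ncone_one : (ncone : NCSeries n) 1 = 1 := by simp [ncone]

lemma sum_right_ncone (f : NCSeries n) (w : FreeMonoid (Fin n)) :
    ∑ k ∈ Finset.range ((FreeMonoid.toList w).length + 1),
      f (FreeMonoid.ofList ((FreeMonoid.toList w).take k)) *
        ncone (FreeMonoid.ofList ((FreeMonoid.toList w).drop k)) = f w := by
  set L := (FreeMonoid.toList w).length with hL
  rw [Finset.sum_eq_single L]
  · rw [List.take_of_length_le (le_of_eq hL.symm), List.drop_of_length_le (le_of_eq hL.symm)]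
    rw [FreeMonoid.ofList_toList]
    simp [ncone, FreeMonoid.ofList_nil]
  · intro k hk hkL
    have hk' : k < L := by
      have := Finset.mem_range.mp hk; omega
    have hdrop : ((FreeMonoid.toList w).drop k) ≠ [] := by
      intro h
      have : ((FreeMonoid.toList w).drop k).length = (FreeMonoid.toList w).length - k := List.length_drop
      rw [h] at this; simp at this; omega
    have : FreeMonoid.ofList ((FreeMonoid.toList w).drop k) ≠ 1 := by
      intro h
      apply hdrop
      have := congrArg FreeMonoid.toList h
      rwa [FreeMonoid.toList_ofList, FreeMonoid.toList_one] at this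
    simp [ncone, this]
  · intro h; exact absurd (Finset.self_mem_range_succ L) h

lemma sum_left_ncone (f : NCSeries n) (w : FreeMonoid (Fin n)) :
    ∑ k ∈ Finset.range ((FreeMonoid.toList w).length + 1),
      ncone (FreeMonoid.ofList ((FreeMonoid.toList w).take k)) *
        f (FreeMonoid.ofList ((FreeMonoid.toList w).drop k)) = f w := by
  rw [Finset.sum_eq_single 0]
  · simp [ncone, FreeMonoid.ofList_nil, FreeMonoid.ofList_toList]
  · intro k hk hk0
    have hk' : 0 < k := Nat.pos_of_ne_zero hk0
    have hkL : k < (FreeMonoid.toList w).length + 1 := Finset.mem_range.mp hk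
    have htake : ((FreeMonoid.toList w).take k) ≠ [] := by
      intro h
      have := congrArg List.length h
      simp only [List.length_take, List.length_nil] at this
      omega
    have : FreeMonoid.ofList ((FreeMonoid.toList w).take k) ≠ 1 := by
      intro h
      apply htake
      have := congrArg FreeMonoid.toList h
      rwa [FreeMonoid.toList_ofList, FreeMonoid.toList_one] at this
    simp [ncone, this]
  · intro h; simp at h

lemma mul_low {p q : ℕ} (A B : NCSeries n) (hA : ord p A) (hB : ord q B)
    (w : FreeMonoid (Fin n)) (hw : (FreeMonoid.toList w).length < p + q) :
    ncmul A B w = A w + B w - ncone w := by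
  unfold ncmul
  have key : ∀ k ∈ Finset.range ((FreeMonoid.toList w).length + 1),
      A (FreeMonoid.ofList ((FreeMonoid.toList w).take k)) *
        B (FreeMonoid.ofList ((FreeMonoid.toList w).drop k)) =
      A (FreeMonoid.ofList ((FreeMonoid.toList w).take k)) *
        ncone (FreeMonoid.ofList ((FreeMonoid.toList w).drop k)) +
      ncone (FreeMonoid.ofList ((FreeMonoid.toList w).take k)) *
        B (FreeMonoid.ofList ((FreeMonoid.toList w).drop k)) -
      ncone (FreeMonoid.ofList ((FreeMonoid.toList w).take k)) *
        ncone (FreeMonoid.ofList ((FreeMonoid.toList w).drop k)) := by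
    intro k hk
    have hkL := Finset.mem_range.mp hk
    have ltake : (FreeMonoid.toList (FreeMonoid.ofList ((FreeMonoid.toList w).take k))).length
        = min k (FreeMonoid.toList w).length := by
      rw [FreeMonoid.toList_ofList, List.length_take]
    have ldrop : (FreeMonoid.toList (FreeMonoid.ofList ((FreeMonoid.toList w).drop k))).length
        = (FreeMonoid.toList w).length - k := by
      rw [FreeMonoid.toList_ofList, List.length_drop]
    by_cases hcase : min k (FreeMonoid.toList w).length < p
    · rw [hA _ (by omega)]; ring
    · have : (FreeMonoid.toList w).length - k < q := by omega
      rw [hB _ (by omega)]; ring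
  rw [Finset.sum_congr rfl key, Finset.sum_sub_distrib, Finset.sum_add_distrib]
  rw [sum_right_ncone, sum_left_ncone, sum_right_ncone]

lemma mul_comm_low {p q : ℕ} (A B : NCSeries n) (hA : ord p A) (hB : ord q B)
    (w : FreeMonoid (Fin n)) (hw : (FreeMonoid.toList w).length < p + q) :
    ncmul A B w = ncmul B A w := by
  rw [mul_low A B hA hB w hw, mul_low B A hB hA w (by omega)]
  ring

lemma cancel (F E : NCSeries n) (hF : F 1 = 1) (m : ℕ)
    (h : ∀ w : FreeMonoid (Fin n), (FreeMonoid.toList w).length < m → ncmul F E w = 0) :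
    ∀ w : FreeMonoid (Fin n), (FreeMonoid.toList w).length < m → E w = 0 := by
  suffices H : ∀ m' : ℕ, ∀ w : FreeMonoid (Fin n),
      (FreeMonoid.toList w).length = m' → m' < m → E w = 0 by
    intro w hw; exact H _ w rfl hw
  intro m'
  induction m' using Nat.strong_induction_on with
  | _ m' IH =>
    intro w hwl hwm
    have h0 := h w (by omega)
    unfold ncmul at h0
    rw [Finset.sum_range_succ'] at h0
    have hzero : ∀ k ∈ Finset.range (FreeMonoid.toList w).length,
        F (FreeMonoid.ofList ((FreeMonoid.toList w).take (k+1))) *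
          E (FreeMonoid.ofList ((FreeMonoid.toList w).drop (k+1))) = 0 := by
      intro k hk
      have hkL := Finset.mem_range.mp hk
      have : E (FreeMonoid.ofList ((FreeMonoid.toList w).drop (k+1))) = 0 := by
        apply IH ((FreeMonoid.toList w).length - (k+1)) (by omega)
        · rw [FreeMonoid.toList_ofList, List.length_drop]
        · omega
      rw [this, mul_zero]
    rw [Finset.sum_eq_zero hzero, zero_add] at h0
    simp only [List.take_zero, List.drop_zero, FreeMonoid.ofList_nil,
      FreeMonoid.ofList_toList, hF, one_mul] at h0
    exact h0

section M
variable (M : FreeGroup (Fin n) → NCSeries n)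
  (hMmul : ∀ g h : FreeGroup (Fin n), M (g * h) = ncmul (M g) (M h))

include hMmul in
lemma comm_ord {p q : ℕ} (hp : 1 ≤ p) (hq : 1 ≤ q) (a b : FreeGroup (Fin n))
    (hA : ord p (M a)) (hB : ord q (M b)) : ord (p + q) (M (gcomm a b)) := by
  have hgrp : a * b = (b * a) * gcomm a b := by
    unfold gcomm; group
  have hM : ncmul (M a) (M b) = ncmul (ncmul (M b) (M a)) (M (gcomm a b)) := by
    rw [← hMmul, ← hMmul, ← hMmul, ← hgrp]
  set BA := ncmul (M b) (M a) with hBA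
  set E : NCSeries n := fun w => M (gcomm a b) w - ncone w with hE
  have hBA1 : BA 1 = 1 := by
    rw [hBA]
    unfold ncmul
    simp only [FreeMonoid.toList_one, List.length_nil, List.take_nil, List.drop_nil]
    rw [Finset.sum_range_one]
    rw [FreeMonoid.ofList_nil, hB 1 (by simp; omega), hA 1 (by simp; omega),
      ncone_one, one_mul]
  have hsplit : ∀ w : FreeMonoid (Fin n),
      ncmul BA (M (gcomm a b)) w = BA w + ncmul BA E w := by
    intro w
    unfold ncmul
    rw [Finset.sum_congr rfl (fun k _ => by
      rw [show M (gcomm a b) (FreeMonoid.ofList ((FreeMonoid.toList w).drop k)) =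
        ncone (FreeMonoid.ofList ((FreeMonoid.toList w).drop k)) +
        E (FreeMonoid.ofList ((FreeMonoid.toList w).drop k)) from by simp [hE], mul_add])]
    rw [Finset.sum_add_distrib, sum_right_ncone]
  intro w hw
  have hz : ∀ u : FreeMonoid (Fin n), (FreeMonoid.toList u).length < p + q →
      ncmul BA E u = 0 := by
    intro u hu
    have h1 := mul_comm_low (M a) (M b) hA hB u hu
    have h2 := congrFun hM u
    rw [hsplit u, h1] at h2
    linarith
  have hEz := cancel BA E hBA1 (p + q) hz w hw
  have hEz' : M (gcomm a b) w - ncone w = 0 := hEz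
  linarith

lemma gen_ord (hMgen : ∀ i : Fin n, M (FreeGroup.of i) = onePlusX i) (i : Fin n) :
    ord 1 (M (FreeGroup.of i)) := by
  rw [hMgen]
  intro w hw
  have hw1 : w = 1 := eq_one_of_toList w (List.length_eq_zero_iff.mp (by omega))
  subst hw1
  simp [onePlusX, ncone]

include hMmul in
lemma iter_ord (hMgen : ∀ i : Fin n, M (FreeGroup.of i) = onePlusX i)
    (l : List (Fin n)) (j : Fin n) :
    ord (l.length + 1) (M (List.foldr gcomm (FreeGroup.of j) (l.map FreeGroup.of))) := by
  induction l with
  | nil =>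
    simpa using gen_ord M hMgen j
  | cons i l IH =>
    simp only [List.map_cons, List.foldr_cons, List.length_cons]
    rw [show l.length + 1 + 1 = 1 + (l.length + 1) by omega]
    exact comm_ord M hMmul le_rfl (by omega) (FreeGroup.of i) _
      (gen_ord M hMgen i) IH
end M
end S9

/-- Let M be the Magnus homomorphism from the free group on x₁,…,xₙ to the
units of ℚ⟨⟨X₁,…,Xₙ⟩⟩, i.e. any multiplicative map with M(xᵢ) = 1 + Xᵢ. For
n ≥ 2, the image of [x₁,[x₂,[…,[x_{n−1},xₙ]…]]]·x₁ has the form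
1 + X₁ + (terms of total degree ≥ n): every coefficient in degree < n agrees
with that of 1 + X₁. -/
theorem stmt9 (n : ℕ) (hn : 2 ≤ n)
    (M : FreeGroup (Fin n) → NCSeries n)
    (hMmul : ∀ g h : FreeGroup (Fin n), M (g * h) = ncmul (M g) (M h))
    (hMone : M 1 = ncone)
    (hMgen : ∀ i : Fin n, M (FreeGroup.of i) = onePlusX i) :
    ∀ w : FreeMonoid (Fin n), (FreeMonoid.toList w).length < n →
      M ((List.foldr gcomm
            (FreeGroup.of (⟨n - 1, by omega⟩ : Fin n))
            (((List.finRange n).dropLast).map FreeGroup.of)) *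
          FreeGroup.of (⟨0, by omega⟩ : Fin n)) w =
        (if w = 1 then 1
          else if w = FreeMonoid.of (⟨0, by omega⟩ : Fin n) then 1 else 0) := by
  intro w hw
  have hc : S9.ord n (M (List.foldr gcomm
      (FreeGroup.of (⟨n - 1, by omega⟩ : Fin n))
      (((List.finRange n).dropLast).map FreeGroup.of))) := by
    have h := S9.iter_ord M hMmul hMgen ((List.finRange n).dropLast)
      (⟨n - 1, by omega⟩ : Fin n)
    rw [List.length_dropLast, List.length_finRange] at h
    rwa [show n - 1 + 1 = n by omega] at h
  rw [hMmul, hMgen]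
  unfold ncmul
  rw [Finset.sum_congr rfl (fun k hk => by
    rw [hc _ (by rw [FreeMonoid.toList_ofList, List.length_take]; omega)])]
  rw [S9.sum_left_ncone]
  by_cases h1 : w = 1 <;>
    by_cases h2 : w = FreeMonoid.of (⟨0, by omega⟩ : Fin n) <;>
    simp [onePlusX, h1, h2]
end
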